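/- For each γ ∈ {α,β}: if ν is a σ_γ-invariant ergodic Borel probability measure on the full shift Σ_γ satisfying ∫ E_γ dν > 1, then ν(K_γ) = 1. -/

import Mathlib

open MeasureTheory Topology Filter
open scoped ENNReal NNReal


/-! ### The alphabet of the (M,N) Dyck–Motzkin shift -/

/-- The alphabet `D = D_α ∪ D_0 ∪ D_β` of the `(M,N)` Dyck–Motzkin shift:
`la k` is the left bracket `α_k`, `u k` is the unit `1_k`, `ra k` is the right bracket `β_k`. -/
inductive DMSym (M N : ℕ) : Type where
  | la : Fin M → DMSym M N
  | u  : Fin N → DMSym M N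
  | ra : Fin M → DMSym M N
deriving DecidableEq

namespace DMSym

def equivSum (M N : ℕ) : DMSym M N ≃ (Fin M ⊕ Fin N ⊕ Fin M) where
  toFun s := match s with
    | .la k => Sum.inl k
    | .u k => Sum.inr (Sum.inl k)
    | .ra k => Sum.inr (Sum.inr k)
  invFun s := match s with
    | Sum.inl k => .la k
    | Sum.inr (Sum.inl k) => .u k
    | Sum.inr (Sum.inr k) => .ra k
  left_inv s := by cases s <;> rfl
  right_inv s := by rcases s with k | k | k <;> rfl

instance (M N : ℕ) : Fintype (DMSym M N) := Fintype.ofEquiv _ (equivSum M N).symm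
instance (M N : ℕ) : TopologicalSpace (DMSym M N) := ⊥
instance (M N : ℕ) : DiscreteTopology (DMSym M N) := ⟨rfl⟩
instance (M N : ℕ) : MeasurableSpace (DMSym M N) := ⊤
instance (M N : ℕ) : BorelSpace (DMSym M N) := ⟨borel_eq_top_of_discrete.symm⟩

end DMSym

/-- Nonzero elements of the Dyck–Motzkin monoid with zero are represented in normal form:
`some (bs, as)` is the reduced word `β_{bs(0)} ⋯ β_{bs(r)} α_{as(0)} ⋯ α_{as(s)}`
(in particular `some ([], [])` is the unit element `1`); `none` is the zero element `0`. -/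
abbrev DyckElem (M : ℕ) := Option (List (Fin M) × List (Fin M))

/-- Multiplication, in the Dyck–Motzkin monoid with zero, of an element in normal form on
the right by a generator: units are absorbed, a left bracket is appended, and a right bracket
either closes the last left bracket (if the indices match), is appended (if there is no left
bracket to close), or produces the zero element (if the indices do not match). -/
def dyckStep {M N : ℕ} : DyckElem M → DMSym M N → DyckElem M
  | none, _ => none
  | some (bs, as), .la k => some (bs, as ++ [k])
  | some (bs, as), .u _ => some (bs, as)
  | some (bs, as), .ra k =>
      match as.getLast? with
      | none => some (bs ++ [k], [])
      | some j => if j = k then some (bs, as.dropLast) else none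

/-- `red w` is the image of the word `w` in the Dyck–Motzkin monoid with zero. -/
def red {M N : ℕ} (w : List (DMSym M N)) : DyckElem M :=
  w.foldl dyckStep (some ([], []))

/-- The word `x_j x_{j+1} ⋯ x_k` read off a bi-infinite sequence `x`. -/
def wordAt {M N : ℕ} (x : ℤ → DMSym M N) (j k : ℤ) : List (DMSym M N) :=
  (List.range (k + 1 - j).toNat).map fun n => x (j + n)

/-- The `(M,N)` Dyck–Motzkin shift `Σ_D`. -/
def SigmaD (M N : ℕ) : Set (ℤ → DMSym M N) :=
  {x | ∀ j k : ℤ, j < k → red (wordAt x j k) ≠ none}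

/-- The left shift `σ`. -/
def shift {A : Type*} : (ℤ → A) → (ℤ → A) := fun x i => x (i + 1)

/-- The inverse `σ⁻¹` of the left shift. -/
def shiftInv {A : Type*} : (ℤ → A) → (ℤ → A) := fun x i => x (i - 1)

lemma wordAt_shift {M N : ℕ} (x : ℤ → DMSym M N) (j k : ℤ) :
    wordAt (shift x) j k = wordAt x (j + 1) (k + 1) := by
  simp only [wordAt, shift]
  rw [show (k + 1 + 1 - (j + 1) : ℤ) = k + 1 - j by ring]
  exact List.map_congr_left fun n _ => by rw [show (j + n + 1 : ℤ) = j + 1 + n by ring]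

lemma shift_mem_SigmaD {M N : ℕ} {x : ℤ → DMSym M N} (hx : x ∈ SigmaD M N) :
    shift x ∈ SigmaD M N := by
  intro j k hjk
  rw [wordAt_shift]
  exact hx (j + 1) (k + 1) (by omega)

/-- The left shift acting on `Σ_D`. -/
def shiftD (M N : ℕ) : ↥(SigmaD M N) → ↥(SigmaD M N) :=
  fun x => ⟨shift x.val, shift_mem_SigmaD x.property⟩

/-- `G_j(x)`: `1` on left brackets, `-1` on right brackets, `0` on units. -/
def Gfun {M N : ℕ} (x : ℤ → DMSym M N) (j : ℤ) : ℤ :=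
  match x j with
  | .la _ => 1
  | .u _ => 0
  | .ra _ => -1

/-- `H_i(x) = Σ_{j=0}^{i-1} G_j(x)` for `i ≥ 1`, `H_i(x) = -Σ_{j=i}^{-1} G_j(x)` for
`i ≤ -1`, and `H_0(x) = 0`. -/
def Hfun {M N : ℕ} (x : ℤ → DMSym M N) (i : ℤ) : ℤ :=
  if 0 ≤ i then ∑ j ∈ Finset.range i.toNat, Gfun x (j : ℤ)
  else -∑ j ∈ Finset.range (-i).toNat, Gfun x (i + (j : ℤ))

/-- The set `A_0`. -/
def A0set (M N : ℕ) : Set (ℤ → DMSym M N) :=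
  SigmaD M N ∩ {x | ∀ i : ℤ,
    (∃ j : ℕ, 1 ≤ j ∧ Hfun x (i + (j : ℤ)) = Hfun x i) ∧
    (∃ j : ℕ, 1 ≤ j ∧ Hfun x (i - (j : ℤ)) = Hfun x i)}

/-- The set `A_α`. -/
def AalphaSet (M N : ℕ) : Set (ℤ → DMSym M N) :=
  SigmaD M N ∩ {x | Tendsto (Hfun x) atTop atTop ∧ Tendsto (Hfun x) atBot atBot}

/-- The set `A_β`. -/
def AbetaSet (M N : ℕ) : Set (ℤ → DMSym M N) :=
  SigmaD M N ∩ {x | Tendsto (Hfun x) atTop atBot ∧ Tendsto (Hfun x) atBot atTop}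

/-- The set `B_α` of sequences in `Σ_D` in which every right bracket is closed. -/
def BalphaSet (M N : ℕ) : Set (ℤ → DMSym M N) :=
  SigmaD M N ∩ {x | ∀ i : ℤ, (∃ k, x i = DMSym.ra k) →
    ∃ j : ℕ, 1 ≤ j ∧ Hfun x (i - (j : ℤ) + 1) = Hfun x (i + 1)}

/-- The set `B_β` of sequences in `Σ_D` in which every left bracket is closed. -/
def BbetaSet (M N : ℕ) : Set (ℤ → DMSym M N) :=
  SigmaD M N ∩ {x | ∀ i : ℤ, (∃ k, x i = DMSym.la k) →
    ∃ j : ℕ, 1 ≤ j ∧ Hfun x (i + (j : ℤ)) = Hfun x i}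

/-- The alphabet `D_α ∪ D_0 ∪ {β}` of the full shift `Σ_α`. -/
inductive AlSym (M N : ℕ) : Type where
  | la : Fin M → AlSym M N
  | u  : Fin N → AlSym M N
  | b  : AlSym M N
deriving DecidableEq

namespace AlSym

def equivSum (M N : ℕ) : AlSym M N ≃ (Fin M ⊕ Fin N ⊕ Unit) where
  toFun s := match s with
    | .la k => Sum.inl k
    | .u k => Sum.inr (Sum.inl k)
    | .b => Sum.inr (Sum.inr ())
  invFun s := match s with
    | Sum.inl k => .la k
    | Sum.inr (Sum.inl k) => .u k
    | Sum.inr (Sum.inr _) => .b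
  left_inv s := by cases s <;> rfl
  right_inv s := by rcases s with k | k | k <;> rfl

instance (M N : ℕ) : Fintype (AlSym M N) := Fintype.ofEquiv _ (equivSum M N).symm
instance (M N : ℕ) : TopologicalSpace (AlSym M N) := ⊥
instance (M N : ℕ) : DiscreteTopology (AlSym M N) := ⟨rfl⟩
instance (M N : ℕ) : MeasurableSpace (AlSym M N) := ⊤
instance (M N : ℕ) : BorelSpace (AlSym M N) := ⟨borel_eq_top_of_discrete.symm⟩

end AlSym

/-- The factor map `φ_α : Σ_D → Σ_α` replacing every right bracket by the single symbol `β`. -/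
def phiAl {M N : ℕ} (x : ℤ → DMSym M N) : ℤ → AlSym M N := fun i =>
  match x i with
  | .la k => .la k
  | .u k => .u k
  | .ra _ => .b

/-- `K_α = φ_α(B_α)`. -/
def Kalpha (M N : ℕ) : Set (ℤ → AlSym M N) := phiAl '' BalphaSet M N

/-- `G_{α,j}`. -/
def GAl {M N : ℕ} (y : ℤ → AlSym M N) (j : ℤ) : ℤ :=
  match y j with
  | .la _ => 1
  | .u _ => 0
  | .b => -1

/-- `H_{α,i}`. -/
def HAl {M N : ℕ} (y : ℤ → AlSym M N) (i : ℤ) : ℤ :=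
  if 0 ≤ i then ∑ j ∈ Finset.range i.toNat, GAl y (j : ℤ)
  else -∑ j ∈ Finset.range (-i).toNat, GAl y (i + (j : ℤ))

/-- `s_α(i,y) = max { j < i+1 : H_{α,j}(y) = H_{α,i+1}(y) }`. -/
noncomputable def sAl {M N : ℕ} (y : ℤ → AlSym M N) (i : ℤ) : ℤ :=
  sSup {j : ℤ | j < i + 1 ∧ HAl y j = HAl y (i + 1)}

/-- `ψ_α : K_α → Σ_D`, replacing each `β` by the right bracket matching the left bracket at
position `s_α(i,y)` (defined as a total function using a junk value outside `K_α`). -/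
noncomputable def psiAl (M N : ℕ) (hM : 0 < M) (y : ℤ → AlSym M N) : ℤ → DMSym M N := fun i =>
  match y i with
  | .la k => .la k
  | .u k => .u k
  | .b =>
    match y (sAl y i) with
    | .la k => .ra k
    | _ => .ra ⟨0, hM⟩

/-- The function `E_α = 2·𝟙_{Σ_α(α)} + 𝟙_{Σ_α(0)}`. -/
def EAl {M N : ℕ} (y : ℤ → AlSym M N) : ℝ :=
  match y 0 with
  | .la _ => 2
  | .u _ => 1
  | .b => 0

/-- The alphabet `{α} ∪ D_0 ∪ D_β` of the full shift `Σ_β`. -/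
inductive BeSym (M N : ℕ) : Type where
  | a  : BeSym M N
  | u  : Fin N → BeSym M N
  | ra : Fin M → BeSym M N
deriving DecidableEq

namespace BeSym

def equivSum (M N : ℕ) : BeSym M N ≃ (Unit ⊕ Fin N ⊕ Fin M) where
  toFun s := match s with
    | .a => Sum.inl ()
    | .u k => Sum.inr (Sum.inl k)
    | .ra k => Sum.inr (Sum.inr k)
  invFun s := match s with
    | Sum.inl _ => .a
    | Sum.inr (Sum.inl k) => .u k
    | Sum.inr (Sum.inr k) => .ra k
  left_inv s := by cases s <;> rfl
  right_inv s := by rcases s with k | k | k <;> rfl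

instance (M N : ℕ) : Fintype (BeSym M N) := Fintype.ofEquiv _ (equivSum M N).symm
instance (M N : ℕ) : TopologicalSpace (BeSym M N) := ⊥
instance (M N : ℕ) : DiscreteTopology (BeSym M N) := ⟨rfl⟩
instance (M N : ℕ) : MeasurableSpace (BeSym M N) := ⊤
instance (M N : ℕ) : BorelSpace (BeSym M N) := ⟨borel_eq_top_of_discrete.symm⟩

end BeSym

/-- The factor map `φ_β : Σ_D → Σ_β` replacing every left bracket by the single symbol `α`. -/
def phiBe {M N : ℕ} (x : ℤ → DMSym M N) : ℤ → BeSym M N := fun i =>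
  match x i with
  | .la _ => .a
  | .u k => .u k
  | .ra k => .ra k

/-- `K_β = φ_β(B_β)`. -/
def Kbeta (M N : ℕ) : Set (ℤ → BeSym M N) := phiBe '' BbetaSet M N

/-- `G_{β,j}`. -/
def GBe {M N : ℕ} (y : ℤ → BeSym M N) (j : ℤ) : ℤ :=
  match y j with
  | .a => 1
  | .u _ => 0
  | .ra _ => -1

/-- `H_{β,i}`. -/
def HBe {M N : ℕ} (y : ℤ → BeSym M N) (i : ℤ) : ℤ :=
  if 0 ≤ i then ∑ j ∈ Finset.range i.toNat, GBe y (j : ℤ)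
  else -∑ j ∈ Finset.range (-i).toNat, GBe y (i + (j : ℤ))

/-- `s_β(i,y) = min { j > i : H_{β,j}(y) = H_{β,i}(y) }`. -/
noncomputable def sBe {M N : ℕ} (y : ℤ → BeSym M N) (i : ℤ) : ℤ :=
  sInf {j : ℤ | i < j ∧ HBe y j = HBe y i}

/-- `ψ_β : K_β → Σ_D`, replacing each `α` by the left bracket matching the right bracket at
position `s_β(i,y)` (defined as a total function using a junk value outside `K_β`). -/
noncomputable def psiBe (M N : ℕ) (hM : 0 < M) (y : ℤ → BeSym M N) : ℤ → DMSym M N := fun i =>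
  match y i with
  | .a =>
    match y (sBe y i) with
    | .ra k => .la k
    | _ => .la ⟨0, hM⟩
  | .u k => .u k
  | .ra k => .ra k

/-- The function `E_β = 2·𝟙_{Σ_β(β)} + 𝟙_{Σ_β(0)}`. -/
def EBe {M N : ℕ} (y : ℤ → BeSym M N) : ℝ :=
  match y 0 with
  | .a => 0
  | .u _ => 1
  | .ra _ => 2

/-- generic height function -/
def Hgen (g : ℤ → ℤ) (i : ℤ) : ℤ :=
  if 0 ≤ i then ∑ j ∈ Finset.range i.toNat, g (j : ℤ)
  else -∑ j ∈ Finset.range (-i).toNat, g (i + (j : ℤ))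

@[simp] lemma Hgen_zero (g : ℤ → ℤ) : Hgen g 0 = 0 := by simp [Hgen]

lemma Hgen_step (g : ℤ → ℤ) (i : ℤ) : Hgen g (i + 1) = Hgen g i + g i := by
  rcases le_or_gt 0 i with hi | hi
  · rw [Hgen, Hgen, if_pos (by omega), if_pos hi]
    have h : (i+1).toNat = i.toNat + 1 := by omega
    rw [h, Finset.sum_range_succ]
    congr 2
    omega
  · rcases eq_or_lt_of_le (by omega : i + 1 ≤ 0) with h0 | h0
    · have hi1 : i = -1 := by omega
      subst hi1
      norm_num [Hgen]
    · rw [Hgen, Hgen, if_neg (by omega), if_neg (by omega)]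
      have h1 : (-i).toNat = (-(i+1)).toNat + 1 := by omega
      rw [h1, Finset.sum_range_succ']
      have h2 : ∀ j ∈ Finset.range (-(i+1)).toNat, g (i + ((j:ℤ)+1)) = g (i+1+(j:ℤ)) := by
        intro j _; congr 1; ring
      push_cast
      rw [Finset.sum_congr rfl h2]
      push_cast
      ring

lemma int_ivt_aux {f : ℤ → ℤ} (hstep : ∀ q, f (q+1) ≤ f q + 1) (a c : ℤ) :
    ∀ n : ℕ, f a ≤ c → c ≤ f (a + (n:ℤ)) → ∃ m, a ≤ m ∧ m ≤ a + (n:ℤ) ∧ f m = c := by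
  intro n
  induction n with
  | zero => intro h1 h2; exact ⟨a, le_refl a, by omega, by norm_num at h2; omega⟩
  | succ n ih =>
    intro h1 h2
    by_cases hc : c ≤ f (a + (n:ℤ))
    · obtain ⟨m, hm1, hm2, hm3⟩ := ih h1 hc
      exact ⟨m, hm1, by push_cast; omega, hm3⟩
    · have hb : a + ((n:ℤ)+1) = (a + (n:ℤ)) + 1 := by ring
      have h3 := hstep (a + (n:ℤ))
      push_cast at h2
      rw [hb] at h2
      refine ⟨a + (n:ℤ) + 1, by omega, by push_cast; omega, by omega⟩

lemma int_ivt_up {f : ℤ → ℤ} (hstep : ∀ q, f (q+1) ≤ f q + 1) {a b c : ℤ}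
    (hab : a ≤ b) (h1 : f a ≤ c) (h2 : c ≤ f b) : ∃ m, a ≤ m ∧ m ≤ b ∧ f m = c := by
  have hb : b = a + ((b - a).toNat : ℤ) := by omega
  obtain ⟨m, h3, h4, h5⟩ := int_ivt_aux hstep a c (b-a).toNat h1 (by rwa [← hb])
  exact ⟨m, h3, by omega, h5⟩

lemma int_ivt_down {f : ℤ → ℤ} (hstep : ∀ q, f q - 1 ≤ f (q+1)) {a b c : ℤ}
    (hab : a ≤ b) (h1 : c ≤ f a) (h2 : f b ≤ c) : ∃ m, a ≤ m ∧ m ≤ b ∧ f m = c := by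
  obtain ⟨m, h3, h4, h5⟩ := int_ivt_up (f := fun q => -(f q))
    (fun q => by show -(f (q+1)) ≤ -(f q) + 1; have := hstep q; omega) hab
    (by show -(f a) ≤ -c; omega) (by show -c ≤ -(f b); omega)
  exact ⟨m, h3, h4, by have : -(f m) = -c := h5; omega⟩
section KeyA
variable {Ω : Type*} [MeasurableSpace Ω] (μ : Measure Ω) [IsProbabilityMeasure μ]
  (τ : Ω → Ω) (f : Ω → ℤ)

/-- Birkhoff-type sums. -/
def Ssum (τ : Ω → Ω) (f : Ω → ℤ) (n : ℕ) (y : Ω) : ℤ := ∑ k ∈ Finset.range n, f (τ^[k] y)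

lemma Ssum_succ (n : ℕ) (y : Ω) : Ssum τ f (n+1) y = Ssum τ f n y + f (τ^[n] y) :=
  Finset.sum_range_succ _ _

lemma Ssum_comp (n : ℕ) (y : Ω) : Ssum τ f n (τ y) = Ssum τ f (n+1) y - f y := by
  rw [Ssum, Ssum, Finset.sum_range_succ']
  simp [Function.iterate_succ_apply]

lemma Ssum_measurable (hτ : Measurable τ) (hf : Measurable f) (n : ℕ) :
    Measurable (Ssum τ f n) := by
  apply Finset.measurable_sum
  intro k _
  exact hf.comp (hτ.iterate k)

/-- Abstract lemma: for an ergodic transformation and an integer-valued function `f`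
bounded by 1 in absolute value with negative mean, the Birkhoff sums a.e. take
arbitrarily negative values. -/
lemma keyA (hτ : Ergodic τ μ) (hf : Measurable f) (hb : ∀ y, |f y| ≤ 1)
    (hneg : ∫ y, (f y : ℝ) ∂μ < 0) :
    ∀ᵐ y ∂μ, ∀ C : ℤ, ∃ n : ℕ, Ssum τ f n y ≤ C := by
  classical
  have hτm : Measurable τ := hτ.toMeasurePreserving.measurable
  have hSm : ∀ n, Measurable (Ssum τ f n) := Ssum_measurable τ f hτm hf
  set E : Set Ω := {y | ∀ C : ℤ, ∃ n : ℕ, Ssum τ f n y ≤ C} with hE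
  have hEm : MeasurableSet E := by
    have : E = ⋂ C : ℤ, ⋃ n : ℕ, {y | Ssum τ f n y ≤ C} := by
      ext y; simp [hE]
    rw [this]
    exact MeasurableSet.iInter fun C => MeasurableSet.iUnion fun n =>
      measurableSet_le (hSm n) measurable_const
  have hEinv : τ ⁻¹' E = E := by
    ext y
    simp only [Set.mem_preimage, hE, Set.mem_setOf_eq]
    constructor
    · intro h C
      obtain ⟨n, hn⟩ := h (C - 1)
      refine ⟨n + 1, ?_⟩
      have h2 := Ssum_comp τ f n y
      have h3 := abs_le.mp (hb y)
      omega
    · intro h C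
      obtain ⟨m, hm⟩ := h (min (C - 1) (-1))
      have hm0 : m ≠ 0 := by
        intro h0; subst h0
        simp [Ssum] at hm
      obtain ⟨n, rfl⟩ := Nat.exists_eq_succ_of_ne_zero hm0
      refine ⟨n, ?_⟩
      rw [Nat.succ_eq_add_one] at hm
      have h2 := Ssum_comp τ f n y
      have h3 := abs_le.mp (hb y)
      omega
  rcases hτ.ae_empty_or_univ hEm hEinv with hnull | hfull
  swap
  · -- E has full measure
    have : μ Eᶜ = 0 := by
      have := (ae_eq_set.mp hfull).2
      simpa [Set.compl_eq_univ_diff] using this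
    exact mem_ae_iff.mpr (by simpa using this)
  -- E is null; derive a contradiction
  exfalso
  have hμE : μ E = 0 := by
    have := ae_eq_set.mp hnull
    simpa using this.1
  set A : ℕ → Set Ω := fun c => ⋃ n : ℕ, {y | Ssum τ f n y ≤ -(c:ℤ)} with hA
  have hAmem : ∀ (c : ℕ) (y : Ω), y ∈ A c ↔ ∃ n : ℕ, Ssum τ f n y ≤ -(c:ℤ) := by
    intro c y; simp [hA]
  have hAm : ∀ c, MeasurableSet (A c) := fun c =>
    MeasurableSet.iUnion fun n => measurableSet_le (hSm n) measurable_const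
  have hAanti : Antitone A := by
    intro c d hcd y hy
    obtain ⟨n, hn⟩ := (hAmem d y).mp hy
    exact (hAmem c y).mpr ⟨n, by omega⟩
  have hAinter : ⋂ c, A c = E := by
    ext y
    simp only [Set.mem_iInter, hE, Set.mem_setOf_eq]
    constructor
    · intro h C
      obtain ⟨n, hn⟩ := (hAmem (-C).toNat y).mp (h (-C).toNat)
      exact ⟨n, by omega⟩
    · intro h c
      exact (hAmem c y).mpr (h (-(c:ℤ)))
  have hlim : Tendsto (fun c => μ (A c)) atTop (𝓝 0) := by
    rw [← hμE, ← hAinter]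
    exact tendsto_measure_iInter_atTop (fun c => (hAm c).nullMeasurableSet) hAanti
      ⟨0, measure_ne_top μ _⟩
  -- truncated infimum
  set T : ℕ → Ω → ℤ := fun c y => sInf (Set.range fun n => max (Ssum τ f n y) (-(c:ℤ))) with hT
  have hTmem : ∀ (c : ℕ) (y : Ω), T c y ∈ (Set.range fun n => max (Ssum τ f n y) (-(c:ℤ))) := fun c y =>
    Int.csInf_mem ⟨_, ⟨0, rfl⟩⟩ ⟨-(c:ℤ), by rintro z ⟨n, rfl⟩; exact le_max_right _ _⟩
  have hTle : ∀ (c : ℕ) (y : Ω) (n : ℕ), T c y ≤ max (Ssum τ f n y) (-(c:ℤ)) := fun c y n =>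
    csInf_le ⟨-(c:ℤ), by rintro z ⟨k, rfl⟩; exact le_max_right _ _⟩ ⟨n, rfl⟩
  have hTlb : ∀ (c : ℕ) (y : Ω), -(c:ℤ) ≤ T c y := by
    intro c y
    obtain ⟨n, hn⟩ := hTmem c y
    rw [← hn]
    exact le_max_right _ _
  have hTub : ∀ (c : ℕ) (y : Ω), T c y ≤ 0 := by
    intro c y
    have := hTle c y 0
    simp [Ssum] at this
    omega
  have hTm : ∀ c, Measurable (T c) := by
    intro c
    apply measurable_to_countable'
    intro m
    have : (T c) ⁻¹' {m} = ({y | ∀ n, m ≤ max (Ssum τ f n y) (-(c:ℤ))} ∩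
        ⋃ n, {y | max (Ssum τ f n y) (-(c:ℤ)) = m}) := by
      ext y
      simp only [Set.mem_preimage, Set.mem_singleton_iff, Set.mem_inter_iff,
        Set.mem_setOf_eq, Set.mem_iUnion]
      constructor
      · rintro rfl
        refine ⟨fun n => hTle c y n, ?_⟩
        obtain ⟨n, hn⟩ := hTmem c y
        exact ⟨n, hn⟩
      · rintro ⟨h1, n, h2⟩
        have l1 : T c y ≤ m := h2 ▸ hTle c y n
        have l2 : m ≤ T c y := le_csInf ⟨_, ⟨0, rfl⟩⟩ (by rintro z ⟨k, rfl⟩; exact h1 k)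
        omega
    rw [this]
    refine MeasurableSet.inter ?_ (MeasurableSet.iUnion fun n => ?_)
    · have : {y | ∀ n, m ≤ max (Ssum τ f n y) (-(c:ℤ))} =
        ⋂ n, {y | m ≤ max (Ssum τ f n y) (-(c:ℤ))} := by ext y; simp
      rw [this]
      exact MeasurableSet.iInter fun n =>
        measurableSet_le measurable_const ((hSm n).max measurable_const)
    · exact ((hSm n).max measurable_const) (measurableSet_singleton m)
  -- pointwise integer inequality
  have hptZ : ∀ (c : ℕ) (y : Ω),
      T c y - T c (τ y) ≤ f y + (if y ∈ A c then 1 else 0) := by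
    intro c y
    by_cases hc : T c y = -(c:ℤ)
    · have hyA : y ∈ A c := by
        obtain ⟨n, hn⟩ := hTmem c y
        have hn' : max (Ssum τ f n y) (-(c:ℤ)) = T c y := hn
        have h2 := le_max_left (Ssum τ f n y) (-(c:ℤ))
        refine (hAmem c y).mpr ⟨n, by omega⟩
      rw [if_pos hyA]
      have h1 := hTlb c (τ y)
      have h3 := abs_le.mp (hb y)
      omega
    · have hgt : -(c:ℤ) < T c y := lt_of_le_of_ne (hTlb c y) (Ne.symm hc)
      obtain ⟨k, hk⟩ := hTmem c (τ y)
      have h5 := hTle c y (k+1)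
      have h6 := Ssum_comp τ f k y
      have h7 := le_max_left (Ssum τ f (k+1) y) (-(c:ℤ))
      have h8 := max_choice (Ssum τ f (k+1) y) (-(c:ℤ))
      have h9 := le_max_left (Ssum τ f k (τ y)) (-(c:ℤ))
      have h10 : max (Ssum τ f k (τ y)) (-(c:ℤ)) = T c (τ y) := hk
      have : (0:ℤ) ≤ if y ∈ A c then 1 else 0 := by positivity
      omega
  -- integrability facts
  have hcastm : Measurable (fun z : ℤ => (z : ℝ)) := fun s _ => trivial
  have hgm : ∀ c : ℕ, Measurable (fun y => ((T c y : ℤ) : ℝ)) := fun c =>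
    hcastm.comp (hTm c)
  have hTint : ∀ c : ℕ, Integrable (fun y => ((T c y : ℤ) : ℝ)) μ := by
    intro c
    refine Integrable.mono' (integrable_const (c:ℝ)) (hgm c).aestronglyMeasurable ?_
    refine Filter.Eventually.of_forall fun y => ?_
    rw [Real.norm_eq_abs, abs_le]
    constructor
    · have := hTlb c y; exact_mod_cast Int.cast_le.mpr this
    · have h1 := hTub c y
      have : ((T c y : ℤ) : ℝ) ≤ 0 := by exact_mod_cast h1
      have hc0 : (0:ℝ) ≤ c := by positivity
      linarith
  have hfint : Integrable (fun y => (f y : ℝ)) μ := by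
    refine Integrable.mono' (integrable_const (1:ℝ)) (hcastm.comp hf).aestronglyMeasurable ?_
    refine Filter.Eventually.of_forall fun y => ?_
    rw [Real.norm_eq_abs]
    have := hb y
    exact_mod_cast (by exact_mod_cast this : |(f y : ℝ)| ≤ (1:ℤ))
  have hτpres := hτ.toMeasurePreserving
  have hcompint : ∀ c : ℕ, Integrable (fun y => ((T c (τ y) : ℤ) : ℝ)) μ := by
    intro c
    refine Integrable.mono' (integrable_const (c:ℝ))
      ((hgm c).comp hτm).aestronglyMeasurable ?_
    refine Filter.Eventually.of_forall fun y => ?_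
    rw [Real.norm_eq_abs, abs_le]
    constructor
    · have := hTlb c (τ y); exact_mod_cast Int.cast_le.mpr this
    · have h1 := hTub c (τ y)
      have : ((T c (τ y) : ℤ) : ℝ) ≤ 0 := by exact_mod_cast h1
      have hc0 : (0:ℝ) ≤ c := by positivity
      linarith
  have hcompeq : ∀ c : ℕ, ∫ y, ((T c (τ y) : ℤ) : ℝ) ∂μ = ∫ y, ((T c y : ℤ) : ℝ) ∂μ := by
    intro c
    have h1 : ∫ y, ((T c y : ℤ) : ℝ) ∂(Measure.map τ μ) = ∫ y, ((T c (τ y) : ℤ) : ℝ) ∂μ :=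
      integral_map hτm.aemeasurable (hgm c).aestronglyMeasurable
    rw [← h1, hτpres.map_eq]
  have hindint : ∀ c : ℕ, Integrable ((A c).indicator (fun _ => (1:ℝ))) μ :=
    fun c => (integrable_const (1:ℝ)).indicator (hAm c)
  have hI : ∀ c : ℕ, 0 ≤ (∫ y, (f y : ℝ) ∂μ) + (μ (A c)).toReal := by
    intro c
    have h0 : ∫ y, (((T c y : ℤ) : ℝ) - ((T c (τ y) : ℤ) : ℝ)) ∂μ = 0 := by
      rw [integral_sub (hTint c) (hcompint c), hcompeq c, sub_self]
    have hmono : ∫ y, (((T c y : ℤ) : ℝ) - ((T c (τ y) : ℤ) : ℝ)) ∂μ ≤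
        ∫ y, ((f y : ℝ) + (A c).indicator (fun _ => (1:ℝ)) y) ∂μ := by
      refine integral_mono ((hTint c).sub (hcompint c)) (hfint.add (hindint c)) ?_
      intro y
      have hz := hptZ c y
      have : ((T c y : ℤ) : ℝ) - ((T c (τ y) : ℤ) : ℝ) ≤
          ((f y : ℤ) : ℝ) + (((if y ∈ A c then 1 else 0 : ℤ)) : ℝ) := by
        push_cast
        exact_mod_cast hz
      refine le_trans this ?_
      simp only [Set.indicator_apply]
      split <;> simp
    rw [h0] at hmono
    rw [integral_add hfint (hindint c)] at hmono
    have hind : ∫ y, (A c).indicator (fun _ => (1:ℝ)) y ∂μ = (μ (A c)).toReal := by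
      rw [integral_indicator (hAm c)]
      simp [Measure.restrict_apply_univ]
      rfl
    rw [hind] at hmono
    linarith
  -- contradiction
  set If := ∫ y, (f y : ℝ) ∂μ with hIf
  have hpos : (0:ℝ) < -If := by linarith
  have hev : ∀ᶠ c in atTop, μ (A c) < ENNReal.ofReal (-If) :=
    hlim.eventually_lt_const (by simpa using ENNReal.ofReal_pos.mpr hpos)
  obtain ⟨c, hc⟩ := hev.exists
  have : (μ (A c)).toReal < -If := by
    rw [← ENNReal.lt_ofReal_iff_toReal_lt (measure_ne_top μ _)]
    exact hc
  have := hI c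
  linarith
end KeyA

section Comb
variable {M N : ℕ}

lemma Gfun_la {x : ℤ → DMSym M N} {i : ℤ} {k : Fin M} (h : x i = DMSym.la k) :
    Gfun x i = 1 := by simp [Gfun, h]

lemma Gfun_u {x : ℤ → DMSym M N} {i : ℤ} {k : Fin N} (h : x i = DMSym.u k) :
    Gfun x i = 0 := by simp [Gfun, h]

lemma Gfun_ra {x : ℤ → DMSym M N} {i : ℤ} {k : Fin M} (h : x i = DMSym.ra k) :
    Gfun x i = -1 := by simp [Gfun, h]

lemma Hfun_eq_Hgen (x : ℤ → DMSym M N) : Hfun x = Hgen (Gfun x) := rfl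

lemma wordAt_eq (x : ℤ → DMSym M N) (j k : ℤ) :
    wordAt x j k = (List.range (k+1-j).toNat).map (fun n : ℕ => x (j + (n:ℤ))) := by
  simp [wordAt]
  rw [show (fun a : ℕ => [(a:ℤ)]) = pure ∘ (fun a : ℕ => (a:ℤ)) from rfl,
    List.flatMap_pure_eq_map, List.map_map]
  rfl

/-- The stack invariant. -/
def StkInv (x : ℤ → DMSym M N) (j t : ℤ) (st : List (ℤ × Fin M)) : Prop :=
  (∀ e ∈ st, j ≤ e.1 ∧ e.1 < t ∧ x e.1 = DMSym.la e.2) ∧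
  (∀ e ∈ st, ∀ q : ℤ, e.1 < q → q ≤ t → Hgen (Gfun x) e.1 < Hgen (Gfun x) q) ∧
  (∀ e, st.head? = some e → Hgen (Gfun x) t = Hgen (Gfun x) e.1 + 1) ∧
  List.Chain' (fun a b => Hgen (Gfun x) a.1 = Hgen (Gfun x) b.1 + 1) st ∧
  List.Pairwise (fun a b => b.1 < a.1) st

/-- A sequence in which the index of every right bracket agrees with the index of its
height-matching left bracket belongs to `Σ_D`. -/
lemma mem_SigmaD_of_match (x : ℤ → DMSym M N)
    (hmatch : ∀ i p : ℤ, (∃ k, x i = DMSym.ra k) → p < i →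
      (∃ k, x p = DMSym.la k) →
      Hgen (Gfun x) p = Hgen (Gfun x) (i+1) →
      (∀ q : ℤ, p < q → q ≤ i → Hgen (Gfun x) p < Hgen (Gfun x) q) →
      ∃ k, x p = DMSym.la k ∧ x i = DMSym.ra k) :
    x ∈ SigmaD M N := by
  intro j k hjk
  suffices main : ∀ n : ℕ, ∃ bs st, StkInv x j (j + (n:ℤ)) st ∧
      red ((List.range n).map fun m : ℕ => x (j + (m:ℤ))) =
        some (bs, (st.map Prod.snd).reverse) by
    obtain ⟨bs, st, _, hred⟩ := main (k + 1 - j).toNat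
    rw [wordAt_eq, hred]
    simp
  intro n
  induction n with
  | zero =>
    refine ⟨[], [], ⟨?_, ?_, ?_, ?_, ?_⟩, rfl⟩ <;> simp [List.Chain']
  | succ n ih =>
    obtain ⟨bs, st, ⟨inv1, inv2, inv3, inv4, inv5⟩, hred⟩ := ih
    set t := j + (n:ℤ) with ht
    have hcast : j + (((n+1:ℕ)):ℤ) = t + 1 := by push_cast; omega
    rw [hcast]
    have hword : (List.range (n+1)).map (fun m : ℕ => x (j + (m:ℤ))) =
        ((List.range n).map fun m : ℕ => x (j + (m:ℤ))) ++ [x t] := by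
      rw [List.range_succ, List.map_append]
      rfl
    have hredstep : red ((List.range (n+1)).map fun m : ℕ => x (j + (m:ℤ))) =
        dyckStep (some (bs, (st.map Prod.snd).reverse)) (x t) := by
      rw [hword]
      show List.foldl dyckStep (some ([], [])) _ = _
      rw [List.foldl_append]
      rw [show List.foldl dyckStep (some ([], []))
        ((List.range n).map fun m : ℕ => x (j + (m:ℤ))) = red _ from rfl, hred]
      rfl
    have hstep := Hgen_step (Gfun x) t
    have hjt : j ≤ t := by omega
    cases hxt : x t with
    | la k0 =>
      have hG : Gfun x t = 1 := Gfun_la hxt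
      refine ⟨bs, (t, k0) :: st, ⟨?_, ?_, ?_, ?_, ?_⟩, ?_⟩
      · intro e he
        rcases List.mem_cons.mp he with rfl | he
        · exact ⟨hjt, by omega, hxt⟩
        · have := inv1 e he; exact ⟨this.1, by omega, this.2.2⟩
      · intro e he q hq1 hq2
        rcases List.mem_cons.mp he with rfl | he
        · have h1 : ((t, k0) : ℤ × Fin M).1 = t := rfl
          rw [h1] at hq1 ⊢
          have : q = t + 1 := by omega
          subst this; omega
        · rcases (by omega : q ≤ t ∨ q = t + 1) with h | h
          · exact inv2 e he q hq1 h
          · subst h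
            have h1 := inv2 e he t ((inv1 e he).2.1) le_rfl
            omega
      · intro e he
        simp only [List.head?_cons, Option.some.injEq] at he
        subst he
        have h1 : ((t, k0) : ℤ × Fin M).1 = t := rfl
        rw [h1]; omega
      · refine List.isChain_cons.mpr ⟨fun b hb => inv3 b hb, inv4⟩
      · exact List.pairwise_cons.mpr ⟨fun e he => (inv1 e he).2.1, inv5⟩
      · rw [hredstep, hxt]
        show some (bs, (st.map Prod.snd).reverse ++ [k0]) = _
        simp
    | u k0 =>
      have hG : Gfun x t = 0 := Gfun_u hxt
      refine ⟨bs, st, ⟨?_, ?_, ?_, inv4, inv5⟩, ?_⟩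
      · intro e he; have := inv1 e he; exact ⟨this.1, by omega, this.2.2⟩
      · intro e he q hq1 hq2
        rcases (by omega : q ≤ t ∨ q = t + 1) with h | h
        · exact inv2 e he q hq1 h
        · subst h
          have h1 := inv2 e he t ((inv1 e he).2.1) le_rfl
          omega
      · intro e he
        have := inv3 e he; omega
      · rw [hredstep, hxt]
        rfl
    | ra k0 =>
      have hG : Gfun x t = -1 := Gfun_ra hxt
      cases st with
      | nil =>
        refine ⟨bs ++ [k0], [], ⟨?_, ?_, ?_, ?_, ?_⟩, ?_⟩
        · simp
        · simp
        · simp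
        · simp [List.Chain']
        · simp
        · rw [hredstep, hxt]
          rfl
      | cons e tl =>
        have he1 := inv1 e List.mem_cons_self
        have hinv3 := inv3 e rfl
        have hHp : Hgen (Gfun x) e.1 = Hgen (Gfun x) (t+1) := by omega
        obtain ⟨k', hk'1, hk'2⟩ := hmatch t e.1 ⟨k0, hxt⟩ he1.2.1 ⟨e.2, he1.2.2⟩ hHp
          (fun q hq1 hq2 => inv2 e List.mem_cons_self q hq1 hq2)
        have hk0 : k' = k0 := by
          rw [hxt] at hk'2; injection hk'2 with h; exact h.symm
        subst hk0
        have he2 : e.2 = k' := by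
          rw [he1.2.2] at hk'1
          injection hk'1
        refine ⟨bs, tl, ⟨?_, ?_, ?_, (List.isChain_cons.mp inv4).2,
          (List.pairwise_cons.mp inv5).2⟩, ?_⟩
        · intro a ha
          have := inv1 a (List.mem_cons_of_mem e ha); exact ⟨this.1, by omega, this.2.2⟩
        · intro a ha q hq1 hq2
          rcases (by omega : q ≤ t ∨ q = t + 1) with h | h
          · exact inv2 a (List.mem_cons_of_mem e ha) q hq1 h
          · subst h
            have hae : a.1 < e.1 := (List.pairwise_cons.mp inv5).1 a ha
            have h1 := inv2 a (List.mem_cons_of_mem e ha) e.1 hae (le_of_lt he1.2.1)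
            omega
        · intro a ha
          have hch := (List.isChain_cons.mp inv4).1 a ha
          omega
        · rw [hredstep, hxt]
          have hrev : ((e :: tl).map Prod.snd).reverse =
              (tl.map Prod.snd).reverse ++ [e.2] := by simp
          rw [hrev]
          show (match ((tl.map Prod.snd).reverse ++ [e.2]).getLast? with
            | none => some (bs ++ [k'], ([] : List (Fin M)))
            | some i => if i = k' then
                some (bs, ((tl.map Prod.snd).reverse ++ [e.2]).dropLast) else none) = _
          rw [he2, List.getLast?_concat]
          simp

end Comb

section Psi
variable {M N : ℕ}

/-- Sequences in `Σ_α` in which every `β` has a height-matching partner in the past. -/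
def SAl (M N : ℕ) : Set (ℤ → AlSym M N) :=
  {y | ∀ i : ℤ, y i = AlSym.b → ∃ m : ℤ, m ≤ i ∧ Hgen (GAl y) m = Hgen (GAl y) (i+1)}

/-- Sequences in `Σ_β` in which every `α` has a height-matching partner in the future. -/
def SBe (M N : ℕ) : Set (ℤ → BeSym M N) :=
  {y | ∀ i : ℤ, y i = BeSym.a → ∃ m : ℤ, i < m ∧ Hgen (GBe y) m = Hgen (GBe y) i}

lemma HAl_eq_Hgen (y : ℤ → AlSym M N) : HAl y = Hgen (GAl y) := rfl
lemma HBe_eq_Hgen (y : ℤ → BeSym M N) : HBe y = Hgen (GBe y) := rfl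

lemma GAl_abs (y : ℤ → AlSym M N) (j : ℤ) : |GAl y j| ≤ 1 := by
  unfold GAl; rcases y j with k | k | _ <;> simp

lemma GBe_abs (y : ℤ → BeSym M N) (j : ℤ) : |GBe y j| ≤ 1 := by
  unfold GBe; rcases y j with _ | k | k <;> simp

/-- ψ(β) variant used to invert `φ_β` (the junk value is chosen at the position *before*
`s_β`). -/
noncomputable def psiB (M N : ℕ) (hM : 0 < M) (y : ℤ → BeSym M N) : ℤ → DMSym M N := fun i =>
  match y i with
  | .a =>
    match y (sBe y i - 1) with
    | .ra k => .la k
    | _ => .la ⟨0, hM⟩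
  | .u k => .u k
  | .ra k => .ra k

lemma GAl_psiAl (hM : 0 < M) (y : ℤ → AlSym M N) (j : ℤ) :
    Gfun (psiAl M N hM y) j = GAl y j := by
  unfold Gfun GAl psiAl
  rcases hyj : y j with k | k | _ <;> simp only [hyj]
  rcases y (sAl y j) with k | k | _ <;> simp

lemma GBe_psiB (hM : 0 < M) (y : ℤ → BeSym M N) (j : ℤ) :
    Gfun (psiB M N hM y) j = GBe y j := by
  unfold Gfun GBe psiB
  rcases hyj : y j with _ | k | k <;> simp only [hyj]
  rcases y (sBe y j - 1) with _ | k | k <;> simp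

lemma SAl_subset_Kalpha (hM : 0 < M) : SAl M N ⊆ Kalpha M N := by
  intro y hy
  set x := psiAl M N hM y with hx
  have hG : Gfun x = GAl y := funext fun j => GAl_psiAl hM y j
  have hH : Hgen (Gfun x) = Hgen (GAl y) := by rw [hG]
  -- characterizations of x
  have hxla : ∀ i k, y i = AlSym.la k → x i = DMSym.la k := by
    intro i k h; simp only [hx, psiAl, h]
  have hxu : ∀ i k, y i = AlSym.u k → x i = DMSym.u k := by
    intro i k h; simp only [hx, psiAl, h]
  have hxb : ∀ i, y i = AlSym.b → ∃ k, x i = DMSym.ra k := by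
    intro i h
    simp only [hx, psiAl, h]
    rcases y (sAl y i) with k | k | _
    · exact ⟨k, rfl⟩
    · exact ⟨⟨0, hM⟩, rfl⟩
    · exact ⟨⟨0, hM⟩, rfl⟩
  have hyla : ∀ i k, x i = DMSym.la k → y i = AlSym.la k := by
    intro i k h
    rcases hyi : y i with k' | k' | _
    · have := hxla i k' hyi; rw [h] at this; injection this with h2; rw [h2]
    · have := hxu i k' hyi; rw [h] at this; injection this
    · obtain ⟨k'', hk''⟩ := hxb i hyi; rw [h] at hk''; injection hk''
  have hyb : ∀ i k, x i = DMSym.ra k → y i = AlSym.b := by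
    intro i k h
    rcases hyi : y i with k' | k' | _
    · have := hxla i k' hyi; rw [h] at this; injection this
    · have := hxu i k' hyi; rw [h] at this; injection this
    · rfl
  -- x ∈ Σ_D
  have hxSig : x ∈ SigmaD M N := by
    apply mem_SigmaD_of_match
    intro i p hxi hpi hxp hHp hC
    obtain ⟨k0, hk0⟩ := hxi
    obtain ⟨k1, hk1⟩ := hxp
    have hyi : y i = AlSym.b := hyb i k0 hk0
    have hyp : y p = AlSym.la k1 := hyla p k1 hk1
    have hsAl : sAl y i = p := by
      apply IsGreatest.csSup_eq
      constructor
      · refine ⟨by omega, ?_⟩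
        rw [HAl_eq_Hgen, ← hH]
        exact hHp
      · intro z hz
        obtain ⟨hz1, hz2⟩ := hz
        by_contra hcon
        push_neg at hcon
        have h3 := hC z hcon (by omega)
        rw [HAl_eq_Hgen, ← hH] at hz2
        omega
    refine ⟨k1, hk1, ?_⟩
    simp only [hx, psiAl, hyi, hsAl, hyp]
  -- x ∈ B_α
  have hxB : x ∈ BalphaSet M N := by
    refine ⟨hxSig, ?_⟩
    intro i hi
    obtain ⟨k, hk⟩ := hi
    obtain ⟨m, hm1, hm2⟩ := hy i (hyb i k hk)
    refine ⟨(i + 1 - m).toNat, by omega, ?_⟩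
    rw [show i - ((i + 1 - m).toNat : ℤ) + 1 = m by omega]
    rw [Hfun_eq_Hgen, hH]
    exact hm2
  -- φ_α x = y
  refine ⟨x, hxB, ?_⟩
  funext i
  rcases hyi : y i with k | k | _
  · simp only [phiAl, hxla i k hyi]
  · simp only [phiAl, hxu i k hyi]
  · obtain ⟨k, hk⟩ := hxb i hyi
    simp only [phiAl, hk]

lemma SBe_subset_Kbeta (hM : 0 < M) : SBe M N ⊆ Kbeta M N := by
  intro y hy
  set x := psiB M N hM y with hx
  have hG : Gfun x = GBe y := funext fun j => GBe_psiB hM y j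
  have hH : Hgen (Gfun x) = Hgen (GBe y) := by rw [hG]
  have hxra : ∀ i k, y i = BeSym.ra k → x i = DMSym.ra k := by
    intro i k h; simp only [hx, psiB, h]
  have hxu : ∀ i k, y i = BeSym.u k → x i = DMSym.u k := by
    intro i k h; simp only [hx, psiB, h]
  have hxa : ∀ i, y i = BeSym.a → ∃ k, x i = DMSym.la k := by
    intro i h
    simp only [hx, psiB, h]
    rcases y (sBe y i - 1) with _ | k | k
    · exact ⟨⟨0, hM⟩, rfl⟩
    · exact ⟨⟨0, hM⟩, rfl⟩
    · exact ⟨k, rfl⟩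
  have hyra : ∀ i k, x i = DMSym.ra k → y i = BeSym.ra k := by
    intro i k h
    rcases hyi : y i with _ | k' | k'
    · obtain ⟨k'', hk''⟩ := hxa i hyi; rw [h] at hk''; injection hk''
    · have := hxu i k' hyi; rw [h] at this; injection this
    · have := hxra i k' hyi; rw [h] at this; injection this with h2
      subst h2
      rfl
  have hya : ∀ i k, x i = DMSym.la k → y i = BeSym.a := by
    intro i k h
    rcases hyi : y i with _ | k' | k'
    · rfl
    · have := hxu i k' hyi; rw [h] at this; injection this
    · have := hxra i k' hyi; rw [h] at this; injection this
  have hxSig : x ∈ SigmaD M N := by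
    apply mem_SigmaD_of_match
    intro i p hxi hpi hxp hHp hC
    obtain ⟨k0, hk0⟩ := hxi
    obtain ⟨k1, hk1⟩ := hxp
    have hyi : y i = BeSym.ra k0 := hyra i k0 hk0
    have hyp : y p = BeSym.a := hya p k1 hk1
    have hsBe : sBe y p = i + 1 := by
      apply IsLeast.csInf_eq
      constructor
      · refine ⟨by omega, ?_⟩
        rw [HBe_eq_Hgen, ← hH]
        exact hHp.symm
      · intro z hz
        obtain ⟨hz1, hz2⟩ := hz
        by_contra hcon
        push_neg at hcon
        have h3 := hC z hz1 (by omega)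
        rw [HBe_eq_Hgen, ← hH] at hz2
        omega
    refine ⟨k0, ?_, hk0⟩
    have : sBe y p - 1 = i := by omega
    simp only [hx, psiB, hyp, this, hyi]
  have hxB : x ∈ BbetaSet M N := by
    refine ⟨hxSig, ?_⟩
    intro i hi
    obtain ⟨k, hk⟩ := hi
    obtain ⟨m, hm1, hm2⟩ := hy i (hya i k hk)
    refine ⟨(m - i).toNat, by omega, ?_⟩
    rw [show i + ((m - i).toNat : ℤ) = m by omega]
    rw [Hfun_eq_Hgen, hH]
    exact hm2
  refine ⟨x, hxB, ?_⟩
  funext i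
  rcases hyi : y i with _ | k | k
  · obtain ⟨k, hk⟩ := hxa i hyi
    simp only [phiBe, hk]
  · simp only [phiBe, hxu i k hyi]
  · simp only [phiBe, hxra i k hyi]

lemma mem_SAl_of_unbounded (y : ℤ → AlSym M N)
    (h : ∀ C : ℤ, ∃ n : ℕ, Hgen (GAl y) (-(n:ℤ)) ≤ C) : y ∈ SAl M N := by
  intro i hyi
  have hstep : ∀ q, (Hgen (GAl y)) (q+1) ≤ (Hgen (GAl y)) q + 1 := by
    intro q
    have h1 := Hgen_step (GAl y) q
    have h2 := abs_le.mp (GAl_abs y q)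
    omega
  have hyG : GAl y i = -1 := by simp [GAl, hyi]
  have hstepi := Hgen_step (GAl y) i
  have hforce : ∃ m' : ℤ, m' ≤ i ∧ (Hgen (GAl y)) m' ≤ (Hgen (GAl y)) (i+1) := by
    rcases le_or_gt 0 i with hi | hi
    · obtain ⟨n, hn⟩ := h ((Hgen (GAl y)) (i+1))
      exact ⟨-(n:ℤ), by omega, hn⟩
    · set F := (Finset.range (-i).toNat).image (fun n : ℕ => (Hgen (GAl y)) (-(n:ℤ))) with hF
      have hFne : F.Nonempty := by
        exact ⟨_, Finset.mem_image.mpr ⟨0, Finset.mem_range.mpr (by omega), rfl⟩⟩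
      obtain ⟨n, hn⟩ := h (min ((Hgen (GAl y)) (i+1)) (F.min' hFne - 1))
      have hbig : ¬ (n < (-i).toNat) := by
        intro hcon
        have hmem : (Hgen (GAl y)) (-(n:ℤ)) ∈ F :=
          Finset.mem_image.mpr ⟨n, Finset.mem_range.mpr hcon, rfl⟩
        have := F.min'_le _ hmem
        omega
      exact ⟨-(n:ℤ), by omega, by omega⟩
  obtain ⟨m', hm1, hm2⟩ := hforce
  obtain ⟨m, hma, hmb, hmc⟩ := int_ivt_up hstep hm1 hm2 (by omega : (Hgen (GAl y)) (i+1) ≤ (Hgen (GAl y)) i)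
  exact ⟨m, hmb, hmc⟩

lemma mem_SBe_of_unbounded (y : ℤ → BeSym M N)
    (h : ∀ C : ℤ, ∃ n : ℕ, Hgen (GBe y) (n:ℤ) ≤ C) : y ∈ SBe M N := by
  intro i hyi
  have hstep : ∀ q, (Hgen (GBe y)) q - 1 ≤ (Hgen (GBe y)) (q+1) := by
    intro q
    have h1 := Hgen_step (GBe y) q
    have h2 := abs_le.mp (GBe_abs y q)
    omega
  have hyG : GBe y i = 1 := by simp [GBe, hyi]
  have hstepi := Hgen_step (GBe y) i
  have hforce : ∃ m' : ℤ, i < m' ∧ (Hgen (GBe y)) m' ≤ (Hgen (GBe y)) i := by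
    set F := insert ((Hgen (GBe y)) 0) ((Finset.range ((i+1).toNat)).image (fun n : ℕ => (Hgen (GBe y)) (n:ℤ))) with hF
    have hFne : F.Nonempty := ⟨(Hgen (GBe y)) 0, Finset.mem_insert_self _ _⟩
    obtain ⟨n, hn⟩ := h (min ((Hgen (GBe y)) i) (F.min' hFne - 1))
    have hbig : ¬ ((n:ℤ) ≤ i) := by
      intro hcon
      have hmem : (Hgen (GBe y)) ((n:ℤ)) ∈ F := by
        refine Finset.mem_insert_of_mem (Finset.mem_image.mpr ⟨n, Finset.mem_range.mpr (by omega), rfl⟩)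
      have := F.min'_le _ hmem
      omega
    exact ⟨(n:ℤ), by omega, by omega⟩
  obtain ⟨m', hm1, hm2⟩ := hforce
  obtain ⟨m, hma, hmb, hmc⟩ :=
    int_ivt_down hstep (by omega : i + 1 ≤ m') (by omega : (Hgen (GBe y)) i ≤ (Hgen (GBe y)) (i+1)) hm2
  exact ⟨m, by omega, hmc⟩

end Psi

section Assembly

lemma measurable_shift {A : Type*} [MeasurableSpace A] :
    Measurable (shift : (ℤ → A) → (ℤ → A)) :=
  measurable_pi_lambda _ fun i => measurable_pi_apply (i + 1)

lemma measurable_shiftInv {A : Type*} [MeasurableSpace A] :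
    Measurable (shiftInv : (ℤ → A) → (ℤ → A)) :=
  measurable_pi_lambda _ fun i => measurable_pi_apply (i - 1)

lemma shiftInv_comp_shift {A : Type*} :
    (shiftInv : (ℤ → A) → (ℤ → A)) ∘ shift = id := by
  funext x i
  show x (i - 1 + 1) = x i
  congr 1
  ring

lemma shift_comp_shiftInv {A : Type*} :
    (shift : (ℤ → A) → (ℤ → A)) ∘ shiftInv = id := by
  funext x i
  show x (i + 1 - 1) = x i
  congr 1
  ring

lemma ergodic_shiftInv {A : Type*} [MeasurableSpace A] {ν : MeasureTheory.Measure (ℤ → A)}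
    (h : Ergodic shift ν) : Ergodic shiftInv ν := by
  constructor
  · refine ⟨measurable_shiftInv, ?_⟩
    conv_lhs => rw [← h.toMeasurePreserving.map_eq]
    rw [MeasureTheory.Measure.map_map measurable_shiftInv measurable_shift,
      shiftInv_comp_shift, MeasureTheory.Measure.map_id]
  · constructor
    intro s hs hinv
    refine h.toPreErgodic.aeconst_set hs ?_
    have h1 : shift ⁻¹' (shiftInv ⁻¹' s) = shift ⁻¹' s := by rw [hinv]
    rw [← h1, ← Set.preimage_comp, shiftInv_comp_shift, Set.preimage_id]

lemma shiftInv_iterate {A : Type*} (y : ℤ → A) (n : ℕ) (i : ℤ) :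
    (shiftInv^[n] y) i = y (i - (n:ℤ)) := by
  induction n generalizing i with
  | zero => simp
  | succ n ih =>
    rw [Function.iterate_succ_apply']
    show (shiftInv^[n] y) (i - 1) = _
    rw [ih]
    congr 1
    push_cast
    ring

lemma shift_iterate {A : Type*} (y : ℤ → A) (n : ℕ) (i : ℤ) :
    (shift^[n] y) i = y (i + (n:ℤ)) := by
  induction n generalizing i with
  | zero => simp
  | succ n ih =>
    rw [Function.iterate_succ_apply']
    show (shift^[n] y) (i + 1) = _
    rw [ih]
    congr 1
    push_cast
    ring

variable {M N : ℕ}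

lemma GAl_congr {y z : ℤ → AlSym M N} {j l : ℤ} (h : y j = z l) : GAl y j = GAl z l := by
  unfold GAl; rw [h]

lemma GBe_congr {y z : ℤ → BeSym M N} {j l : ℤ} (h : y j = z l) : GBe y j = GBe z l := by
  unfold GBe; rw [h]

lemma measurable_GAl0 : Measurable (fun y : ℤ → AlSym M N => GAl y 0) := by
  have : (fun y : ℤ → AlSym M N => GAl y 0) =
      (fun s : AlSym M N => (match s with | .la _ => 1 | .u _ => 0 | .b => -1 : ℤ)) ∘
        (fun y : ℤ → AlSym M N => y 0) := rfl
  rw [this]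
  exact Measurable.comp (fun _ _ => MeasurableSpace.measurableSet_top) (measurable_pi_apply 0)

lemma measurable_GBe0 : Measurable (fun y : ℤ → BeSym M N => GBe y 0) := by
  have : (fun y : ℤ → BeSym M N => GBe y 0) =
      (fun s : BeSym M N => (match s with | .a => 1 | .u _ => 0 | .ra _ => -1 : ℤ)) ∘
        (fun y : ℤ → BeSym M N => y 0) := rfl
  rw [this]
  exact Measurable.comp (fun _ _ => MeasurableSpace.measurableSet_top) (measurable_pi_apply 0)

lemma measurable_cast_int : Measurable (fun z : ℤ => (z : ℝ)) := fun _ _ => trivial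

lemma Ssum_alpha (y : ℤ → AlSym M N) (n : ℕ) :
    Ssum shiftInv (fun z => -(GAl z (-1))) n y = Hgen (GAl y) (-(n:ℤ)) := by
  induction n with
  | zero => simp [Ssum]
  | succ n ih =>
    rw [Ssum_succ, ih]
    have h1 : GAl (shiftInv^[n] y) (-1) = GAl y (-1 - (n:ℤ)) :=
      GAl_congr (shiftInv_iterate y n (-1))
    have h2 := Hgen_step (GAl y) (-((n:ℕ):ℤ) - 1)
    have h3 : -((n:ℕ):ℤ) - 1 + 1 = -((n:ℕ):ℤ) := by ring
    rw [h3] at h2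
    have h4 : -(((n+1:ℕ)):ℤ) = -((n:ℕ):ℤ) - 1 := by push_cast; ring
    have h5 : (-1 - (n:ℤ)) = -((n:ℕ):ℤ) - 1 := by push_cast; ring
    rw [h4, h1, h5]
    omega

lemma Ssum_beta (y : ℤ → BeSym M N) (n : ℕ) :
    Ssum shift (fun z => GBe z 0) n y = Hgen (GBe y) (n:ℤ) := by
  induction n with
  | zero => simp [Ssum]
  | succ n ih =>
    rw [Ssum_succ, ih]
    have h1 : GBe (shift^[n] y) 0 = GBe y ((n:ℕ):ℤ) :=
      GBe_congr (by rw [shift_iterate]; norm_num)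
    have h2 := Hgen_step (GBe y) ((n:ℕ):ℤ)
    have h4 : (((n+1:ℕ)):ℤ) = ((n:ℕ):ℤ) + 1 := by push_cast; ring
    rw [h4, h1]
    omega

end Assembly

/-- Lemma 2.3(a): for each `γ ∈ {α, β}`, every shift-invariant ergodic probability measure
`ν` on the full shift `Σ_γ` with `∫ E_γ dν > 1` satisfies `ν(K_γ) = 1`. -/
theorem erg_full_measure_K (M N : ℕ) (hM : 2 ≤ M) :
    (∀ ν : ProbabilityMeasure (ℤ → AlSym M N), Ergodic shift ν.toMeasure →
      1 < ∫ y, EAl y ∂ν.toMeasure → ν.toMeasure (Kalpha M N) = 1) ∧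
    (∀ ν : ProbabilityMeasure (ℤ → BeSym M N), Ergodic shift ν.toMeasure →
      1 < ∫ y, EBe y ∂ν.toMeasure → ν.toMeasure (Kbeta M N) = 1) := by
  have hM' : 0 < M := by omega
  constructor
  · -- α case
    intro ν herg hint
    set μ := ν.toMeasure with hμ
    set f : (ℤ → AlSym M N) → ℤ := fun z => -(GAl z (-1)) with hf
    have hs0 : ∀ y : ℤ → AlSym M N, (shiftInv y) 0 = y (-1) := by
      intro y; show y (0 - 1) = y (-1); norm_num
    have hfm : Measurable f := by
      have h1 : f = (fun y : ℤ → AlSym M N => -(GAl y 0)) ∘ shiftInv := by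
        funext y
        show -(GAl y (-1)) = -(GAl (shiftInv y) 0)
        rw [GAl_congr (hs0 y)]
      rw [h1]
      exact (measurable_GAl0.neg).comp measurable_shiftInv
    have hfb : ∀ y, |f y| ≤ 1 := by
      intro y
      show |(-(GAl y (-1)))| ≤ 1
      rw [abs_neg]
      exact GAl_abs y (-1)
    have hES : ∀ y : ℤ → AlSym M N, EAl y = 1 + ((GAl y 0 : ℤ) : ℝ) := by
      intro y
      unfold EAl GAl
      rcases y 0 with k | k | _ <;> norm_num
    have hG0m : Measurable (fun y : ℤ → AlSym M N => ((GAl y 0 : ℤ) : ℝ)) :=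
      measurable_cast_int.comp measurable_GAl0
    have hG0int : MeasureTheory.Integrable (fun y => ((GAl y 0 : ℤ) : ℝ)) μ := by
      refine MeasureTheory.Integrable.mono' (MeasureTheory.integrable_const (1:ℝ))
        hG0m.aestronglyMeasurable ?_
      refine Filter.Eventually.of_forall fun y => ?_
      rw [Real.norm_eq_abs]
      have := GAl_abs y 0
      exact_mod_cast (by exact_mod_cast this : |((GAl y 0 : ℤ):ℝ)| ≤ ((1:ℤ):ℝ))
    have hIG : ∫ y, ((GAl y 0 : ℤ):ℝ) ∂μ = (∫ y, EAl y ∂μ) - 1 := by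
      have h1 : ∫ y, EAl y ∂μ = ∫ y, (1 + ((GAl y 0 : ℤ):ℝ)) ∂μ := by
        exact MeasureTheory.integral_congr_ae (Filter.Eventually.of_forall hES)
      rw [h1, MeasureTheory.integral_add (MeasureTheory.integrable_const 1) hG0int,
        MeasureTheory.integral_const]
      simp
    have hergInv : Ergodic shiftInv μ := ergodic_shiftInv herg
    have hpres := hergInv.toMeasurePreserving
    have hfint : ∫ y, ((f y : ℤ):ℝ) ∂μ < 0 := by
      have h1 : (fun y : ℤ → AlSym M N => ((f y : ℤ):ℝ)) =
          (fun y : ℤ → AlSym M N => -((GAl y 0 : ℤ):ℝ)) ∘ shiftInv := by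
        funext y
        show ((-(GAl y (-1)) : ℤ):ℝ) = -((GAl (shiftInv y) 0 : ℤ):ℝ)
        rw [GAl_congr (hs0 y)]
        push_cast
        ring
      have h2 : ∫ y, ((f y : ℤ):ℝ) ∂μ = ∫ y, -((GAl y 0 : ℤ):ℝ) ∂μ := by
        rw [h1]
        have h3 : ∫ y, (fun y : ℤ → AlSym M N => -((GAl y 0 : ℤ):ℝ)) y
            ∂(MeasureTheory.Measure.map shiftInv μ) =
            ∫ y, ((fun y : ℤ → AlSym M N => -((GAl y 0 : ℤ):ℝ)) ∘ shiftInv) y ∂μ :=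
          MeasureTheory.integral_map measurable_shiftInv.aemeasurable
            (hG0m.neg).aestronglyMeasurable
        rw [← h3, hpres.map_eq]
      rw [h2, MeasureTheory.integral_neg]
      linarith
    have hae := keyA μ shiftInv f hergInv hfm hfb hfint
    have haeK : ∀ᵐ y ∂μ, y ∈ Kalpha M N := by
      refine hae.mono (fun y hy => SAl_subset_Kalpha hM' ?_)
      apply mem_SAl_of_unbounded
      intro C
      obtain ⟨n, hn⟩ := hy C
      rw [Ssum_alpha] at hn
      exact ⟨n, hn⟩
    have hc : μ (Kalpha M N)ᶜ = 0 := by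
      have := MeasureTheory.ae_iff.mp haeK
      simpa [Set.compl_def] using this
    have h1 : (1:ℝ≥0∞) ≤ μ (Kalpha M N) := by
      have h3 : μ Set.univ ≤ μ (Kalpha M N) + μ (Kalpha M N)ᶜ := by
        refine le_trans (MeasureTheory.measure_mono ?_) (MeasureTheory.measure_union_le _ _)
        rw [Set.union_compl_self]
      rw [hc, add_zero, MeasureTheory.measure_univ] at h3
      exact h3
    exact le_antisymm MeasureTheory.prob_le_one h1
  · -- β case
    intro ν herg hint
    set μ := ν.toMeasure with hμ
    set f : (ℤ → BeSym M N) → ℤ := fun z => GBe z 0 with hf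
    have hfm : Measurable f := measurable_GBe0
    have hfb : ∀ y, |f y| ≤ 1 := fun y => GBe_abs y 0
    have hES : ∀ y : ℤ → BeSym M N, EBe y = 1 - ((GBe y 0 : ℤ) : ℝ) := by
      intro y
      unfold EBe GBe
      rcases y 0 with _ | k | k <;> norm_num
    have hG0m : Measurable (fun y : ℤ → BeSym M N => ((GBe y 0 : ℤ) : ℝ)) :=
      measurable_cast_int.comp measurable_GBe0
    have hG0int : MeasureTheory.Integrable (fun y => ((GBe y 0 : ℤ) : ℝ)) μ := by
      refine MeasureTheory.Integrable.mono' (MeasureTheory.integrable_const (1:ℝ))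
        hG0m.aestronglyMeasurable ?_
      refine Filter.Eventually.of_forall fun y => ?_
      rw [Real.norm_eq_abs]
      have := GBe_abs y 0
      exact_mod_cast (by exact_mod_cast this : |((GBe y 0 : ℤ):ℝ)| ≤ ((1:ℤ):ℝ))
    have hfint : ∫ y, ((f y : ℤ):ℝ) ∂μ < 0 := by
      have h1 : ∫ y, EBe y ∂μ = ∫ y, (1 - ((GBe y 0 : ℤ):ℝ)) ∂μ :=
        MeasureTheory.integral_congr_ae (Filter.Eventually.of_forall hES)
      rw [MeasureTheory.integral_sub (MeasureTheory.integrable_const 1) hG0int,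
        MeasureTheory.integral_const] at h1
      simp only [smul_eq_mul, mul_one, MeasureTheory.measure_univ, ENNReal.toReal_one, probReal_univ] at h1
      have h2 : ∫ y, ((f y : ℤ):ℝ) ∂μ = ∫ y, ((GBe y 0 : ℤ):ℝ) ∂μ := rfl
      rw [h2]
      linarith
    have hae := keyA μ shift f herg hfm hfb hfint
    have haeK : ∀ᵐ y ∂μ, y ∈ Kbeta M N := by
      refine hae.mono (fun y hy => SBe_subset_Kbeta hM' ?_)
      apply mem_SBe_of_unbounded
      intro C
      obtain ⟨n, hn⟩ := hy C
      rw [Ssum_beta] at hn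
      exact ⟨n, hn⟩
    have hc : μ (Kbeta M N)ᶜ = 0 := by
      have := MeasureTheory.ae_iff.mp haeK
      simpa [Set.compl_def] using this
    have h1 : (1:ℝ≥0∞) ≤ μ (Kbeta M N) := by
      have h3 : μ Set.univ ≤ μ (Kbeta M N) + μ (Kbeta M N)ᶜ := by
        refine le_trans (MeasureTheory.measure_mono ?_) (MeasureTheory.measure_union_le _ _)
        rw [Set.union_compl_self]
      rw [hc, add_zero, MeasureTheory.measure_univ] at h3
      exact h3
    exact le_antisymm MeasureTheory.prob_le_one h1
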